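/- arXiv:2106.00618 — 6 statements merged into one kernel-verified Lean document; each statement's English description precedes it below -/
import Mathlib

section
/- Let κ be an uncountable cardinal and φ a nice filter assignment for κ such that (i) S_α is countable for all α ∈ κ∖ω, and (ii) for every countable I ⊆ κ∖ω the family {φ(i) : i ∈ I} is disjointly representable. Then the topology τ_φ is Hausdorff. -/
open Cardinal Set

/-- `F` is a free filter on the set `S`. -/
def IsFreeFilterOn {α : Type*} (F : Set (Set α)) (S : Set α) : Prop :=
  (∀ A ∈ F, A ⊆ S) ∧ S ∈ F ∧ ∅ ∉ F ∧
    (∀ A ∈ F, ∀ B, A ⊆ B → B ⊆ S → B ∈ F) ∧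
    (∀ A ∈ F, ∀ B ∈ F, A ∩ B ∈ F) ∧
    (∀ A ⊆ S, (S \ A).Finite → A ∈ F)

/-- Iterated closure of `{x, y}` under `α ↦ S α` (for `α` satisfying `P`). -/
def Jseq (S : Ordinal → Set Ordinal) (P : Ordinal → Prop) (x y : Ordinal) : ℕ → Set Ordinal
  | 0 => {x, y}
  | n + 1 => Jseq S P x y n ∪ ⋃ α ∈ {a | a ∈ Jseq S P x y n ∧ P a}, S α

/-- Levels of the open set generated from `x` using sets `B α`. -/
def Gseq (B : Ordinal → Set Ordinal) (x : Ordinal) : ℕ → Set Ordinal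
  | 0 => {x}
  | n + 1 => ⋃ α ∈ {a | a ∈ Gseq B x n ∧ Ordinal.omega0 ≤ a}, B α

/-- if `φ` is a nice filter assignment for the uncountable cardinal `κ`
such that each `S_α` is countable and every countable subfamily of the filters is
disjointly representable, then the topology `τ_φ` is Hausdorff. -/
theorem stmt1 (κ : Cardinal) (hκ : ℵ₀ < κ)
    (S : Ordinal → Set Ordinal) (φ : Ordinal → Set (Set Ordinal))
    (hS : ∀ α, Ordinal.omega0 ≤ α → α < κ.ord →
      S α ⊆ Set.Iio α ∧ (S α).Infinite ∧ (S α).Countable)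
    (hφ : ∀ α, Ordinal.omega0 ≤ α → α < κ.ord → IsFreeFilterOn (φ α) (S α))
    (hdisj : ∀ I : Set Ordinal, I.Countable →
      I ⊆ {α | Ordinal.omega0 ≤ α ∧ α < κ.ord} →
      ∃ A : Ordinal → Set Ordinal, (∀ i ∈ I, A i ∈ φ i) ∧
        (∀ i ∈ I, ∀ j ∈ I, i ≠ j → A i ∩ A j = ∅)) :
    ∀ x ∈ Set.Iio κ.ord, ∀ y ∈ Set.Iio κ.ord, x ≠ y →
      ∃ G ∈ {G : Set Ordinal | G ⊆ Set.Iio κ.ord ∧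
          ∀ α ∈ G, Ordinal.omega0 ≤ α → G ∩ S α ∈ φ α},
        ∃ H ∈ {G : Set Ordinal | G ⊆ Set.Iio κ.ord ∧
          ∀ α ∈ G, Ordinal.omega0 ≤ α → G ∩ S α ∈ φ α},
          x ∈ G ∧ y ∈ H ∧ G ∩ H = ∅ := by
  intro x hx y hy hxy
  set P : Ordinal → Prop := fun α => Ordinal.omega0 ≤ α ∧ α < κ.ord with hP
  -- countable closure
  have hJcnt : ∀ n, (Jseq S P x y n).Countable := by
    intro n
    induction n with
    | zero => exact (Set.countable_singleton y).insert x
    | succ n ih =>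
      refine ih.union (Set.Countable.biUnion (ih.mono (fun a ha => ha.1)) ?_)
      rintro a ⟨_, hω, hlt⟩
      exact (hS a hω hlt).2.2
  set Jω : Set Ordinal := ⋃ n, Jseq S P x y n with hJω
  have hJωcnt : Jω.Countable := Set.countable_iUnion hJcnt
  set I : Set Ordinal := Jω ∩ {α | P α} with hI
  have hIsub : I ⊆ {α | Ordinal.omega0 ≤ α ∧ α < κ.ord} := fun a ha => ha.2
  obtain ⟨A, hA1, hA2⟩ := hdisj I (hJωcnt.mono Set.inter_subset_left) hIsub
  set B : Ordinal → Set Ordinal := fun α => A α \ {x, y} with hB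
  -- B α is in the filter for α ∈ I
  have hBφ : ∀ α ∈ I, B α ∈ φ α := by
    intro α hα
    obtain ⟨hω, hlt⟩ := hα.2
    obtain ⟨hsub, hSmem, hne, hup, hcap, hcof⟩ := hφ α hω hlt
    have hAS : A α ⊆ S α := hsub _ (hA1 α hα)
    have h1 : S α \ ({x, y} : Set Ordinal) ∈ φ α := by
      refine hcof _ Set.diff_subset ?_
      refine Set.Finite.subset ((Set.finite_singleton y).insert x) ?_
      intro z hz
      by_contra h
      exact hz.2 ⟨hz.1, h⟩
    have h2 : A α ∩ (S α \ {x, y}) ∈ φ α := hcap _ (hA1 α hα) _ h1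
    have h3 : A α ∩ (S α \ {x, y}) = B α := by
      ext z
      simp only [hB, Set.mem_inter_iff, Set.mem_diff]
      constructor
      · rintro ⟨h, _, h'⟩; exact ⟨h, h'⟩
      · rintro ⟨h, h'⟩; exact ⟨h, hAS h, h'⟩
    rwa [h3] at h2
  have hBA : ∀ α, B α ⊆ A α := fun α => Set.diff_subset
  have hBS : ∀ α ∈ I, B α ⊆ S α := fun α hα =>
    (hBA α).trans ((hφ α hα.2.1 hα.2.2).1 _ (hA1 α hα))
  have hxB : ∀ α, x ∉ B α := fun α h => h.2 (Or.inl rfl)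
  have hyB : ∀ α, y ∉ B α := fun α h => h.2 (Or.inr rfl)
  -- Jω is closed under S
  have hJclosed : ∀ α ∈ Jω, P α → S α ⊆ Jω := by
    intro α hα hPα z hz
    obtain ⟨n, hn⟩ := Set.mem_iUnion.1 hα
    exact Set.mem_iUnion.2 ⟨n + 1, Or.inr (Set.mem_biUnion ⟨hn, hPα⟩ hz)⟩
  -- invariant: levels are in Jω and below κ.ord
  have hInv : ∀ z₀ ∈ Jω, z₀ < κ.ord → ∀ n, Gseq B z₀ n ⊆ Jω ∩ Set.Iio κ.ord := by
    intro z₀ hz₀ hz₀κ n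
    induction n with
    | zero => rintro z rfl; exact ⟨hz₀, hz₀κ⟩
    | succ n ih =>
      intro z hz
      obtain ⟨α, ⟨hαG, hαω⟩, hzB⟩ := Set.mem_iUnion₂.1 hz
      have hα' := ih hαG
      have hαI : α ∈ I := ⟨hα'.1, hαω, hα'.2⟩
      have hzS : z ∈ S α := hBS α hαI hzB
      have hzα : z < α := (hS α hαω hα'.2).1 hzS
      exact ⟨hJclosed α hα'.1 hαI.2 hzS, hzα.trans hα'.2⟩
  have hxJ : x ∈ Jω := Set.mem_iUnion.2 ⟨0, Or.inl rfl⟩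
  have hyJ : y ∈ Jω := Set.mem_iUnion.2 ⟨0, Or.inr rfl⟩
  -- the open sets
  set G : Set Ordinal := ⋃ n, Gseq B x n with hG
  set H : Set Ordinal := ⋃ n, Gseq B y n with hH
  have hGinv := hInv x hxJ hx
  have hHinv := hInv y hyJ hy
  -- openness
  have hopen : ∀ z₀ ∈ Jω, z₀ < κ.ord →
      (⋃ n, Gseq B z₀ n) ⊆ Set.Iio κ.ord ∧
      ∀ α ∈ ⋃ n, Gseq B z₀ n, Ordinal.omega0 ≤ α →
        (⋃ n, Gseq B z₀ n) ∩ S α ∈ φ α := by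
    intro z₀ hz₀ hz₀κ
    constructor
    · intro z hz
      obtain ⟨n, hn⟩ := Set.mem_iUnion.1 hz
      exact (hInv z₀ hz₀ hz₀κ n hn).2
    · intro α hα hαω
      obtain ⟨n, hn⟩ := Set.mem_iUnion.1 hα
      have hα' := hInv z₀ hz₀ hz₀κ n hn
      have hαI : α ∈ I := ⟨hα'.1, hαω, hα'.2⟩
      obtain ⟨hsub, hSmem, hne, hup, hcap, hcof⟩ := hφ α hαω hα'.2
      refine hup _ (hBφ α hαI) _ ?_ Set.inter_subset_right
      intro z hz
      refine ⟨Set.mem_iUnion.2 ⟨n + 1, Set.mem_biUnion ⟨hn, hαω⟩ hz⟩, hBS α hαI hz⟩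
  -- disjointness of levels
  have hdisjlev : ∀ k m n, m + n ≤ k → ∀ z, z ∈ Gseq B x m → z ∈ Gseq B y n → False := by
    intro k
    induction k with
    | zero =>
      intro m n hmn z hzG hzH
      have hm : m = 0 := by omega
      have hn : n = 0 := by omega
      subst hm; subst hn
      exact hxy (hzG.symm.trans hzH)
    | succ k ih =>
      intro m n hmn z hzG hzH
      match m, n with
      | 0, 0 => exact hxy (hzG.symm.trans hzH)
      | 0, n + 1 =>
        obtain ⟨α, _, hzB⟩ := Set.mem_iUnion₂.1 hzH
        have : z = x := hzG
        exact hxB α (this ▸ hzB)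
      | m + 1, 0 =>
        obtain ⟨α, _, hzB⟩ := Set.mem_iUnion₂.1 hzG
        have : z = y := hzH
        exact hyB α (this ▸ hzB)
      | m + 1, n + 1 =>
        obtain ⟨α, ⟨hαG, hαω⟩, hzBα⟩ := Set.mem_iUnion₂.1 hzG
        obtain ⟨β, ⟨hβH, hβω⟩, hzBβ⟩ := Set.mem_iUnion₂.1 hzH
        have hα' := hGinv m hαG
        have hβ' := hHinv n hβH
        have hαI : α ∈ I := ⟨hα'.1, hαω, hα'.2⟩
        have hβI : β ∈ I := ⟨hβ'.1, hβω, hβ'.2⟩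
        have hαβ : α = β := by
          by_contra hne
          have := hA2 α hαI β hβI hne
          exact absurd this (Set.Nonempty.ne_empty ⟨z, hBA α hzBα, hBA β hzBβ⟩)
        subst hαβ
        exact ih m n (by omega) α hαG hβH
  refine ⟨G, ⟨(hopen x hxJ hx).1, (hopen x hxJ hx).2⟩, H, ⟨(hopen y hyJ hy).1, (hopen y hyJ hy).2⟩,
    Set.mem_iUnion.2 ⟨0, rfl⟩, Set.mem_iUnion.2 ⟨0, rfl⟩, ?_⟩
  ext z
  simp only [Set.mem_inter_iff, Set.mem_empty_iff_false, iff_false, not_and]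
  intro hzG hzH
  obtain ⟨m, hm⟩ := Set.mem_iUnion.1 hzG
  obtain ⟨n, hn⟩ := Set.mem_iUnion.1 hzH
  exact hdisjlev (m + n) m n le_rfl z hm hn
end

section
/- Every countable family of weak P-points in ω* is disjointly representable: if {u_n : n < ω} are pairwise distinct free ultrafilters on ω each of which is a weak P-point, then there exist pairwise disjoint sets A_n ⊆ ω with A_n ∈ u_n for all n. -/
open Filter Set

/-- A free (nonprincipal) ultrafilter on `ℕ`. -/
def IsFreeUltrafilter (u : Ultrafilter ℕ) : Prop :=
  Filter.cofinite ≤ (u : Filter ℕ)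

/-- `u` is a weak P-point of `ω*`: `u` is free and `u` is not in the closure
(in the Stone topology on ultrafilters) of any countable set of free
ultrafilters not containing `u`. -/
def IsWeakPPoint (u : Ultrafilter ℕ) : Prop :=
  IsFreeUltrafilter u ∧
    ∀ D : Set (Ultrafilter ℕ), D.Countable → (∀ v ∈ D, IsFreeUltrafilter v) →
      u ∉ D → u ∉ closure D

/-- every countable family of pairwise distinct weak P-points of `ω*`
is disjointly representable. -/
theorem stmt3 (u : ℕ → Ultrafilter ℕ) (hinj : Function.Injective u)
    (hwp : ∀ n, IsWeakPPoint (u n)) :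
    ∃ A : ℕ → Set ℕ, (∀ n, A n ∈ u n) ∧ ∀ n m, n ≠ m → A n ∩ A m = ∅ := by
  -- Step 1: for each n, find B n ∈ u n with B n ∉ u m for all m ≠ n.
  have key : ∀ n, ∃ B : Set ℕ, B ∈ u n ∧ ∀ m, m ≠ n → B ∉ u m := by
    intro n
    set D : Set (Ultrafilter ℕ) := u '' {m | m ≠ n} with hD
    have hnotin : u n ∉ D := by
      rintro ⟨m, hm, hmn⟩
      exact hm (hinj hmn)
    have hcl : u n ∉ closure D :=
      (hwp n).2 D ((Set.to_countable _).image u)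
        (by rintro v ⟨m, _, rfl⟩; exact (hwp m).1) hnotin
    rw [ultrafilterBasis_is_basis.mem_closure_iff] at hcl
    push_neg at hcl
    obtain ⟨o, ⟨B, rfl⟩, hmem, hdisj⟩ := hcl
    refine ⟨B, hmem, fun m hm hBm => ?_⟩
    rw [Set.eq_empty_iff_forall_notMem] at hdisj
    exact hdisj (u m) ⟨hBm, ⟨m, hm, rfl⟩⟩
  choose B hB hB' using key
  -- Step 2: disjointify.
  refine ⟨fun n => B n ∩ ⋂ m ∈ Finset.range n, (B m)ᶜ, fun n => ?_, ?_⟩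
  · refine (u n).toFilter.inter_sets (hB n) ((Filter.biInter_finset_mem _).2 ?_)
    intro m hm
    have hmn : m ≠ n := Nat.ne_of_lt (Finset.mem_range.1 hm)
    exact (Ultrafilter.compl_mem_iff_notMem).2 (hB' m n hmn.symm)
  · have aux : ∀ n m, n < m →
        (B n ∩ ⋂ k ∈ Finset.range n, (B k)ᶜ) ∩ (B m ∩ ⋂ k ∈ Finset.range m, (B k)ᶜ) = ∅ := by
      intro n m hnm
      rw [Set.eq_empty_iff_forall_notMem]
      rintro x ⟨⟨hxB, -⟩, ⟨-, hxI⟩⟩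
      exact (Set.mem_iInter₂.1 hxI n (Finset.mem_range.2 hnm)) hxB
    intro n m hnm
    rcases lt_or_gt_of_ne hnm with h | h
    · exact aux n m h
    · rw [Set.inter_comm]; exact aux m n h
end

section
/- If X is a locally countable, countably compact T₁ topological space of cardinality κ > 𝔠 (the continuum), then κ^ω = κ. -/
open Cardinal Set

/-- if `X` is a locally countable, countably compact T₁ space of
cardinality `κ > 𝔠`, then `κ^ω = κ`. -/
theorem stmt4 (X : Type*) [TopologicalSpace X] [T1Space X]
    (hloc : ∀ x : X, ∃ U ∈ nhds x, U.Countable)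
    (hcc : ∀ A : Set X, A.Countable → A.Infinite →
      ∃ x : X, ∀ U ∈ nhds x, (U ∩ A).Infinite)
    (hbig : Cardinal.continuum < #X) :
    #X ^ ℵ₀ = #X := by
  classical
  choose U hUmem hUcnt using hloc
  have hCont : ℵ₀ ≤ #X := aleph0_le_continuum.trans hbig.le
  have hXinf : Infinite X := Cardinal.infinite_iff.2 hCont
  obtain ⟨e⟩ := Cardinal.eq.1 (Cardinal.mk_list_eq_mk X)
  -- branch maps
  set br : (ℕ → X) → ℕ → List X := fun f n => List.ofFn (fun i : Fin n => f i) with hbr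
  have hbrinj : ∀ f, Function.Injective (br f) := by
    intro f a b h
    simpa [hbr] using congrArg List.length h
  set A : (ℕ → X) → Set X := fun f => e '' Set.range (br f) with hA
  have hAc : ∀ f, (A f).Countable := fun f => (Set.countable_range _).image _
  have hAi : ∀ f, (A f).Infinite := fun f =>
    (Set.infinite_range_of_injective (hbrinj f)).image e.injective.injOn
  -- almost disjointness
  have hfin : ∀ f g : ℕ → X, f ≠ g → (A f ∩ A g).Finite := by
    intro f g hne
    have hex : ∃ n, f n ≠ g n := Function.ne_iff.1 hne
    set N := Nat.find hex with hN
    have hsub : Set.range (br f) ∩ Set.range (br g) ⊆ (br f) '' (Set.Iic N) := by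
      rintro l ⟨⟨n, rfl⟩, ⟨m, hm⟩⟩
      have hlen : m = n := by simpa [hbr] using congrArg List.length hm
      subst hlen
      have hn : m ≤ N := by
        by_contra hgt
        push_neg at hgt
        have h3 := List.ofFn_inj.1 hm
        have h4 := congrFun h3 ⟨N, hgt⟩
        exact Nat.find_spec hex h4.symm
      exact ⟨m, hn, rfl⟩
    have hfin1 : (Set.range (br f) ∩ Set.range (br g)).Finite :=
      ((Set.finite_Iic N).image (br f)).subset hsub
    have himg : A f ∩ A g = e '' (Set.range (br f) ∩ Set.range (br g)) := by
      rw [hA]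
      exact (Set.image_inter e.injective).symm
    rw [himg]
    exact hfin1.image e
  -- accumulation points
  choose xf hxf using fun f => hcc (A f) (hAc f) (hAi f)
  -- encode countable neighborhoods into ℕ
  have hienc : ∀ x : X, ∃ i : ↥(U x) → ℕ, Function.Injective i :=
    fun x => Set.countable_iff_exists_injective.1 (hUcnt x)
  choose i hi using hienc
  -- the injection
  set Θ : (ℕ → X) → X × Set ℕ :=
    fun f => (xf f, i (xf f) '' {y : ↥(U (xf f)) | (y : X) ∈ A f}) with hΘ
  have hΘinj : Function.Injective Θ := by
    intro f g h
    by_contra hne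
    obtain ⟨h1, h2⟩ := Prod.ext_iff.1 h
    change xf f = xf g at h1
    change i (xf f) '' {y : ↥(U (xf f)) | (y : X) ∈ A f} = i (xf g) '' {y : ↥(U (xf g)) | (y : X) ∈ A g} at h2
    rw [h1] at h2
    have h3 : {y : ↥(U (xf g)) | (y : X) ∈ A f}
        = {y : ↥(U (xf g)) | (y : X) ∈ A g} :=
      Set.image_injective.2 (hi (xf g)) h2
    have h4 : U (xf g) ∩ A f = U (xf g) ∩ A g := by
      ext z
      constructor
      · rintro ⟨hz1, hz2⟩
        have : (⟨z, hz1⟩ : ↥(U (xf g))) ∈ {y : ↥(U (xf g)) | (y : X) ∈ A f} := hz2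
        rw [h3] at this
        exact ⟨hz1, this⟩
      · rintro ⟨hz1, hz2⟩
        have : (⟨z, hz1⟩ : ↥(U (xf g))) ∈ {y : ↥(U (xf g)) | (y : X) ∈ A g} := hz2
        rw [← h3] at this
        exact ⟨hz1, this⟩
    have hinf : (U (xf f) ∩ A f).Infinite := hxf f (U (xf f)) (hUmem (xf f))
    rw [h1] at hinf
    have hsub : U (xf g) ∩ A f ⊆ A f ∩ A g := by
      intro z hz
      exact ⟨hz.2, (h4 ▸ hz).2⟩
    exact hinf (((hfin f g hne).subset hsub))
  -- cardinality computation
  have hle : #(ℕ → X) ≤ #(X × Set ℕ) := Cardinal.mk_le_of_injective hΘinj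
  have hprod : #(X × Set ℕ) = #X * 𝔠 := by
    rw [Cardinal.mk_prod, Cardinal.lift_uzero, Cardinal.mk_set, Cardinal.mk_nat,
      Cardinal.two_power_aleph0, Cardinal.lift_continuum]
  have hmul : #X * 𝔠 = #X := Cardinal.mul_eq_left hCont hbig.le Cardinal.continuum_ne_zero
  have harrow : #(ℕ → X) = #X ^ (ℵ₀ : Cardinal) := by
    rw [Cardinal.mk_arrow, Cardinal.lift_uzero, Cardinal.mk_nat, Cardinal.lift_aleph0]
  have hle2 : #X ^ (ℵ₀ : Cardinal) ≤ #X := by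
    rw [← harrow]
    calc #(ℕ → X) ≤ #(X × Set ℕ) := hle
      _ = #X := by rw [hprod, hmul]
  exact le_antisymm hle2 (Cardinal.self_le_power _ (by simp [Cardinal.one_le_aleph0]))
end

section
/- If λ is a cardinal with cofinality ω, then there is an almost disjoint family 𝒜 ⊆ [λ]^ω of countably infinite subsets of λ with |𝒜| = λ^ω. -/
open Cardinal Set

/-- Product of cardinals as the cardinality of a pi type of chosen representatives. -/
private lemma tarski_prod_out {ι : Type} (f : ι → Cardinal.{0}) :
    Cardinal.prod f = #(Π i, (f i).out) := by
  rw [mk_pi]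
  simp only [mk_out]

/-- Each factor of a product of nonzero cardinals is at most the product. -/
private lemma tarski_le_prod (f : ℕ → Cardinal.{0}) (h : ∀ i, f i ≠ 0) (i₀ : ℕ) :
    f i₀ ≤ Cardinal.prod f := by
  classical
  have hne : ∀ i, Nonempty (f i).out := fun i => mk_ne_zero_iff.1 (by rw [mk_out]; exact h i)
  have hprod := tarski_prod_out f
  rw [hprod, ← mk_out (f i₀)]
  exact mk_le_of_injective (f := fun x => Function.update (fun i => (hne i).some) i₀ x)
    (fun a b hab => by
      have := congrFun hab i₀
      simpa using this)

/-- An injective sequence of naturals is unbounded. -/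
private lemma tarski_unbounded {u : ℕ → ℕ} (hu : Function.Injective u) (n : ℕ) :
    ∃ j, n ≤ u j := by
  by_contra h
  push_neg at h
  exact (Set.infinite_range_of_injective hu)
    ((Set.finite_Iio n).subset (by rintro _ ⟨j, rfl⟩; exact h j))

/-- Tarski: if `λ` is a cardinal of cofinality `ω`, then there is an
almost disjoint family of countably infinite subsets of `λ` of cardinality `λ^ω`. -/
theorem stmt5 (l : Cardinal.{0}) (hcof : l.ord.cof = ℵ₀) :
    ∃ 𝒜 : Set (Set Ordinal.{0}),
      (∀ A ∈ 𝒜, A ⊆ Set.Iio l.ord ∧ A.Countable ∧ A.Infinite) ∧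
      (∀ A ∈ 𝒜, ∀ B ∈ 𝒜, A ≠ B → (A ∩ B).Finite) ∧
      #𝒜 = Cardinal.lift.{1} (l ^ ℵ₀) := by
  classical
  have hl : ℵ₀ ≤ l := by
    rw [← hcof]
    simpa using Ordinal.cof_le_card l.ord
  have hl0 : l ≠ 0 := (aleph0_pos.trans_le hl).ne'
  -- an unbounded ω-sequence below l.ord
  obtain ⟨ι, f0, hlsub, hι⟩ := Ordinal.exists_lsub_cof l.ord
  rw [hcof, ← mk_nat] at hι
  obtain ⟨e0⟩ := Cardinal.eq.mp hι
  set F : ℕ → Ordinal.{0} := f0 ∘ e0.symm with hF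
  have hFlt : ∀ n, F n < l.ord := fun n => by
    conv_rhs => rw [← hlsub]
    exact Ordinal.lt_lsub _ _
  have hFub : ∀ β < l.ord, ∃ n, β ≤ F n := by
    intro β hβ
    rw [← hlsub] at hβ
    obtain ⟨i, hi⟩ := Ordinal.lt_lsub_iff.mp hβ
    exact ⟨e0 i, by simpa [hF] using hi⟩
  -- successors of cardinals below l stay below l
  have hsucc : ∀ κ < l, Order.succ κ < l := by
    intro κ hκ
    rcases lt_or_ge κ ℵ₀ with hfin | hinf
    · exact lt_of_lt_of_le (Cardinal.isSuccLimit_aleph0.succ_lt hfin) hl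
    · by_contra h
      push_neg at h
      have hls : l = Order.succ κ := le_antisymm h (Order.succ_le_of_lt hκ)
      have hreg := Cardinal.isRegular_succ hinf
      rw [← hls] at hreg
      have hc := hreg.cof_eq
      rw [hcof] at hc
      exact absurd (hinf.trans_lt hκ) (by rw [← hc]; exact lt_irrefl _)
  -- a strictly increasing unbounded sequence of cardinals below l
  let c : ℕ → Cardinal.{0} := fun n =>
    Nat.rec (max 1 (F 0).card) (fun n ih => max (Order.succ ih) (F (n + 1)).card) n
  have hclt : ∀ n, c n < l := by
    intro n
    induction n with
    | zero => exact max_lt (one_lt_aleph0.trans_le hl) (Cardinal.lt_ord.mp (hFlt 0))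
    | succ n ih => exact max_lt (hsucc _ ih) (Cardinal.lt_ord.mp (hFlt (n + 1)))
  have hcmono : StrictMono c := by
    apply strictMono_nat_of_lt_succ
    intro n
    exact lt_of_lt_of_le (Order.lt_succ _) (le_max_left _ _)
  have hc0 : ∀ n, c n ≠ 0 := by
    intro n
    have h1 : (1 : Cardinal) ≤ c 0 := le_max_left _ _
    exact (zero_lt_one.trans_le (h1.trans (hcmono.monotone (Nat.zero_le n)))).ne'
  have hcF : ∀ n, (F n).card ≤ c n := by
    intro n
    cases n with
    | zero => exact le_max_right _ _
    | succ n => exact le_max_right _ _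
  have hcub : ∀ κ < l, ∃ n, κ < c n := by
    intro κ hκ
    obtain ⟨n, hn⟩ := hFub κ.ord (Cardinal.ord_lt_ord.mpr hκ)
    have hκc : κ ≤ c n := by
      have := Ordinal.card_le_card hn
      rw [Cardinal.card_ord] at this
      exact this.trans (hcF n)
    exact ⟨n + 1, hκc.trans_lt (hcmono (Nat.lt_succ_self n))⟩
  -- the key Tarski product computation : ∏ c n = l ^ ℵ₀
  have hkeyle : Cardinal.prod c ≤ l ^ ℵ₀ := by
    have := Cardinal.prod_le_prod c (fun _ : ℕ => l) (fun i => (hclt i).le)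
    rwa [Cardinal.prod_const, Cardinal.lift_uzero, Cardinal.lift_uzero, mk_nat] at this
  have hkeyge : l ^ ℵ₀ ≤ Cardinal.prod c := by
    let p : ℕ ≃ (Σ _ : ℕ, ℕ) := (Denumerable.eqv (Σ _ : ℕ, ℕ)).symm
    let q : ℕ → ℕ → ℕ := fun i j => p.symm ⟨i, j⟩
    have hqinj : ∀ i, Function.Injective (q i) := by
      intro i a b hab
      have h2 := p.symm.injective hab
      exact congrArg Sigma.snd h2
    have hrow : ∀ i : ℕ, l ≤ Cardinal.prod (fun j => c (q i j)) := by
      intro i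
      apply le_of_forall_lt
      intro κ hκ
      obtain ⟨n, hn⟩ := hcub κ hκ
      obtain ⟨j, hj⟩ := tarski_unbounded (hqinj i) n
      calc κ < c n := hn
        _ ≤ c (q i j) := hcmono.monotone hj
        _ ≤ Cardinal.prod (fun j => c (q i j)) :=
            tarski_le_prod (fun j => c (q i j)) (fun j => hc0 _) j
    have hsplit : Cardinal.prod c
        = Cardinal.prod (fun i => Cardinal.prod (fun j => c (q i j))) := by
      have h1 : Cardinal.prod c = #(Π n, (c n).out) := tarski_prod_out c
      have h2 : Cardinal.prod (fun i => Cardinal.prod (fun j => c (q i j)))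
          = #(Π i j, (c (q i j)).out) := by
        have hinner : (fun i => Cardinal.prod (fun j => c (q i j)))
            = fun i : ℕ => #(Π j, (c (q i j)).out) := funext fun i => tarski_prod_out _
        rw [hinner, mk_pi]
      rw [h1, h2]
      exact Cardinal.eq.mpr ⟨(Equiv.piCongrLeft' (fun n => (c n).out) p).trans
        (Equiv.piCurry (fun i j => (c (p.symm ⟨i, j⟩)).out))⟩
    calc l ^ ℵ₀ = Cardinal.prod (fun _ : ℕ => l) := by
          rw [Cardinal.prod_const, Cardinal.lift_uzero, Cardinal.lift_uzero, mk_nat]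
      _ ≤ Cardinal.prod (fun i => Cardinal.prod (fun j => c (q i j))) :=
          Cardinal.prod_le_prod _ _ hrow
      _ = Cardinal.prod c := hsplit.symm
  have hkey : Cardinal.prod c = l ^ ℵ₀ := le_antisymm hkeyle hkeyge
  -- the type of ω-sequences through the c n's
  let T : ℕ → Type := fun n => (c n).out
  have hD : #(Π n, T n) = l ^ ℵ₀ := by
    rw [← hkey, tarski_prod_out c]
  -- the coding embedding for finite initial segments
  have hS : #(Σ n : ℕ, Π i : Fin n, T i) ≤ l := by
    rw [mk_sigma]
    have hn : ∀ n : ℕ, #(Π i : Fin n, T i) ≤ l := by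
      intro n
      calc #(Π i : Fin n, T i) = Cardinal.prod (fun i : Fin n => c i) := by
            rw [mk_pi]; simp only [T, mk_out]
        _ ≤ Cardinal.prod (fun _ : Fin n => l) :=
            Cardinal.prod_le_prod _ _ (fun i => (hclt i).le)
        _ = l ^ (n : Cardinal) := by
            rw [Cardinal.prod_const, Cardinal.lift_uzero, Cardinal.lift_uzero, mk_fin]
        _ ≤ l := Cardinal.power_nat_le hl
    calc Cardinal.sum (fun n : ℕ => #(Π i : Fin n, T i))
        ≤ Cardinal.sum (fun _ : ℕ => l) := Cardinal.sum_le_sum _ _ hn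
      _ = ℵ₀ * l := by
          rw [Cardinal.sum_const, Cardinal.lift_uzero, Cardinal.lift_uzero, mk_nat]
      _ = l := Cardinal.mul_eq_right hl hl Cardinal.aleph0_ne_zero
  have hcode : Nonempty ((Σ n : ℕ, Π i : Fin n, T i) ↪ (Set.Iio l.ord : Set Ordinal.{0})) := by
    rw [← Cardinal.lift_mk_le.{0}]
    rw [Ordinal.mk_Iio_ordinal, Cardinal.card_ord, Cardinal.lift_uzero]
    exact Cardinal.lift_le.mpr hS
  obtain ⟨emb⟩ := hcode
  -- the almost disjoint family
  let Φ : (Π n, T n) → Set Ordinal.{0} := fun g =>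
    Set.range (fun n : ℕ => ((emb ⟨n, fun i : Fin n => g i⟩ : Set.Iio l.ord) : Ordinal))
  have hinj : ∀ g : Π n, T n,
      Function.Injective (fun n : ℕ =>
        ((emb ⟨n, fun i : Fin n => g i⟩ : Set.Iio l.ord) : Ordinal)) := by
    intro g a b hab
    have := emb.injective (Subtype.coe_injective hab)
    exact congrArg Sigma.fst this
  have hfin : ∀ g g' : Π n, T n, g ≠ g' → (Φ g ∩ Φ g').Finite := by
    intro g g' hne
    have hm : ∃ m, g m ≠ g' m := by
      by_contra h
      push_neg at h
      exact hne (funext h)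
    obtain ⟨m, hm⟩ := hm
    apply ((Set.finite_Iic m).image
      (fun n : ℕ => ((emb ⟨n, fun i : Fin n => g i⟩ : Set.Iio l.ord) : Ordinal))).subset
    rintro x ⟨⟨n, rfl⟩, ⟨n', hx'⟩⟩
    refine ⟨n, ?_, rfl⟩
    have hsig : (⟨n', fun i : Fin n' => g' i⟩ : Σ k : ℕ, Π i : Fin k, T i)
        = ⟨n, fun i : Fin n => g i⟩ := emb.injective (Subtype.coe_injective hx')
    rw [Sigma.ext_iff] at hsig
    obtain ⟨rfl, h2⟩ := hsig
    have h3 := eq_of_heq h2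
    simp only [Set.mem_Iic]
    by_contra hnm
    push_neg at hnm
    exact hm (congrFun h3 ⟨m, hnm⟩).symm
  have hΦinf : ∀ g : Π n, T n, (Φ g).Infinite := fun g =>
    Set.infinite_range_of_injective (hinj g)
  have hΦinj : Function.Injective Φ := by
    intro g g' h
    by_contra hne
    have := hfin g g' hne
    rw [h, Set.inter_self] at this
    exact hΦinf g' this
  refine ⟨Set.range Φ, ?_, ?_, ?_⟩
  · rintro A ⟨g, rfl⟩
    refine ⟨?_, Set.countable_range _, hΦinf g⟩
    rintro x ⟨n, rfl⟩
    exact (emb ⟨n, fun i : Fin n => g i⟩).2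
  · rintro A ⟨g, rfl⟩ B ⟨g', rfl⟩ hAB
    exact hfin g g' (fun h => hAB (congrArg Φ h))
  · rw [← hD, ← Cardinal.lift_uzero #(Set.range Φ)]
    exact Cardinal.mk_range_eq_lift hΦinj
end

section
/- Every locally countable SAU space X has cardinality at most 2^𝔠. -/
open Cardinal Set

/-- A SAU (strongly anti-Urysohn) space: Hausdorff, with at least two non-isolated
points, in which any two infinite closed subsets intersect. -/
def IsSAU (X : Type*) [TopologicalSpace X] : Prop :=
  T2Space X ∧
    (∃ x y : X, x ≠ y ∧ ¬IsOpen ({x} : Set X) ∧ ¬IsOpen ({y} : Set X)) ∧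
    ∀ F G : Set X, IsClosed F → IsClosed G → F.Infinite → G.Infinite →
      (F ∩ G).Nonempty

open Topology

lemma aux_mk_closure_le {X : Type*} [TopologicalSpace X] [T2Space X] (s : Set X)
    (hs : s.Countable) : #(closure s) ≤ 2 ^ Cardinal.continuum := by
  have hinj : Function.Injective
      (fun y : closure s => {A : Set s | (y : X) ∈ closure ((↑) '' A)}) := by
    intro y z hyz
    by_contra hne
    have hne' : (y : X) ≠ (z : X) := fun h => hne (Subtype.ext h)
    obtain ⟨U, V, hU, hV, hyU, hzV, hUV⟩ := t2_separation hne'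
    have hA : (y : X) ∈ closure ((↑) '' {a : s | (a : X) ∈ U}) := by
      have himg : (↑) '' {a : s | (a : X) ∈ U} = s ∩ U := by
        ext w
        simp only [Set.mem_image, Set.mem_setOf_eq, Set.mem_inter_iff]
        constructor
        · rintro ⟨⟨a, ha⟩, hw, rfl⟩; exact ⟨ha, hw⟩
        · rintro ⟨hw, hwU⟩; exact ⟨⟨w, hw⟩, hwU, rfl⟩
      rw [himg, mem_closure_iff_nhds]
      intro N hN
      have := (mem_closure_iff_nhds.mp y.2) (N ∩ U)
        (Filter.inter_mem hN (hU.mem_nhds hyU))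
      obtain ⟨w, ⟨hwN, hwU⟩, hws⟩ := this
      exact ⟨w, hwN, hws, hwU⟩
    have hB : (z : X) ∉ closure ((↑) '' {a : s | (a : X) ∈ U}) := by
      intro hzc
      obtain ⟨w, hwV, a, ha, rfl⟩ := mem_closure_iff_nhds.mp hzc V (hV.mem_nhds hzV)
      exact Set.disjoint_left.mp hUV ha hwV
    have : {A : Set s | (y : X) ∈ closure ((↑) '' A)} =
        {A : Set s | (z : X) ∈ closure ((↑) '' A)} := hyz
    rw [Set.ext_iff] at this
    exact hB ((this _).mp hA)
  calc #(closure s) ≤ #(Set (Set s)) := mk_le_of_injective hinj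
    _ = (2 : Cardinal) ^ ((2 : Cardinal) ^ #s) := by rw [mk_set, mk_set]
    _ ≤ (2 : Cardinal) ^ ((2 : Cardinal) ^ ℵ₀) := by
        refine power_le_power_left two_ne_zero (power_le_power_left two_ne_zero ?_)
        haveI := Set.countable_coe_iff.mpr hs
        exact mk_le_aleph0
    _ = 2 ^ Cardinal.continuum := by rw [two_power_aleph0]

/-- every locally countable SAU space has cardinality at most `2^𝔠`. -/
theorem stmt6 (X : Type*) [TopologicalSpace X] (hSAU : IsSAU X)
    (hloc : ∀ x : X, ∃ U ∈ nhds x, U.Countable) :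
    #X ≤ 2 ^ Cardinal.continuum := by
  obtain ⟨hT2, ⟨x, y, hxy, hx, hy⟩, hsau⟩ := hSAU
  haveI := hT2
  haveI : Filter.NeBot (𝓝[≠] x) :=
    ⟨fun h => hx ((isOpen_singleton_iff_punctured_nhds x).mpr h)⟩
  obtain ⟨U, hU, hUc⟩ := hloc x
  have hUinf : U.Infinite := infinite_of_mem_nhds x hU
  set F : Set X := closure U with hF
  have hFcl : IsClosed F := isClosed_closure
  have hFinf : F.Infinite := hUinf.mono subset_closure
  have hFcard : #F ≤ 2 ^ Cardinal.continuum := aux_mk_closure_le U hUc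
  choose W hW hWc using hloc
  set O : Set X := ⋃ y : F, interior (W y) with hO
  have hOopen : IsOpen O := isOpen_iUnion fun _ => isOpen_interior
  have hFO : F ⊆ O := fun z hz =>
    Set.mem_iUnion.mpr ⟨⟨z, hz⟩, mem_interior_iff_mem_nhds.mpr (hW z)⟩
  have haleph : ℵ₀ ≤ 2 ^ Cardinal.continuum :=
    aleph0_le_continuum.trans (cantor Cardinal.continuum).le
  have hOcard : #O ≤ 2 ^ Cardinal.continuum := by
    calc #O ≤ #F * ⨆ y : F, #(interior (W y)) := mk_iUnion_le _
      _ ≤ (2 ^ Cardinal.continuum) * ℵ₀ := by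
          refine mul_le_mul' hFcard (ciSup_le' fun i => ?_)
          have : (interior (W (i : X))).Countable := (hWc _).mono interior_subset
          haveI := Set.countable_coe_iff.mpr this
          exact mk_le_aleph0
      _ ≤ (2 ^ Cardinal.continuum) * (2 ^ Cardinal.continuum) :=
          mul_le_mul' le_rfl haleph
      _ = 2 ^ Cardinal.continuum := mul_eq_self haleph
  have hcompl : (Oᶜ).Finite := by
    by_contra hfin
    obtain ⟨w, hwF, hwO⟩ := hsau F Oᶜ hFcl hOopen.isClosed_compl hFinf
      (hfin)
    exact hwO (hFO hwF)
  calc #X = #(O ∪ Oᶜ : Set X) := by rw [Set.union_compl_self, mk_univ]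
    _ ≤ #O + #(Oᶜ : Set X) := mk_union_le _ _
    _ ≤ (2 ^ Cardinal.continuum) + (2 ^ Cardinal.continuum) := by
        refine add_le_add hOcard (le_trans ?_ haleph)
        haveI := Set.countable_coe_iff.mpr hcompl.countable
        exact mk_le_aleph0
    _ = 2 ^ Cardinal.continuum := add_eq_self haleph
end

section
/- Suppose κ is an uncountable cardinal such that there exists an ω-hitting family ℋ ⊆ [κ]^ω with |ℋ| = λ, i.e., for every A ∈ [κ]^ω there is H ∈ ℋ with |A ∩ H| = ω. Then there is a family 𝒞 ⊆ [κ]^ω with |𝒞| ≤ λ that is cofinal in ([κ]^ω, ⊆), i.e., every countable subset of κ is contained in a member of 𝒞. -/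
open Cardinal Set

universe u

/-- if `κ` is an uncountable cardinal (here realized as the cardinality
of a type `K`) and `ℋ ⊆ [κ]^ω` is an ω-hitting family of cardinality `λ`, then
there is a family `𝒞 ⊆ [κ]^ω` of cardinality at most `λ` that is cofinal in
`([κ]^ω, ⊆)`. -/
theorem stmt9 (K : Type u) (hK : ℵ₀ < #K) (lam : Cardinal.{u})
    (H : Set (Set K)) (hHmem : ∀ h ∈ H, h.Countable ∧ h.Infinite)
    (hHcard : #H = lam)
    (hhit : ∀ A : Set K, A.Countable → A.Infinite →
      ∃ h ∈ H, (A ∩ h).Infinite) :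
    ∃ C : Set (Set K), #C ≤ lam ∧
      (∀ c ∈ C, c.Countable ∧ c.Infinite) ∧
      ∀ A : Set K, A.Countable → ∃ c ∈ C, A ⊆ c := by
  have hKinf : Infinite K := by
    rw [Cardinal.infinite_iff]; exact hK.le
  obtain ⟨e⟩ : Nonempty (Finset K ≃ K) := by
    rw [← Cardinal.eq]; exact Cardinal.mk_finset_of_infinite K
  set F : Set K → Set K := fun h => ⋃ x ∈ h, ((e.symm x : Finset K) : Set K) with hF
  refine ⟨F '' H, ?_, ?_, ?_⟩
  · calc #(F '' H) ≤ #H := Cardinal.mk_image_le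
      _ = lam := hHcard
  · rintro c ⟨h, hh, rfl⟩
    obtain ⟨hcnt, hinf⟩ := hHmem h hh
    refine ⟨hcnt.biUnion fun x _ => (e.symm x).countable_toSet, ?_⟩
    intro hfin
    have hsubfin : {t : Set K | t ⊆ F h}.Finite := hfin.finite_subsets
    have himg : ((fun x => ((e.symm x : Finset K) : Set K)) '' h).Finite := by
      refine hsubfin.subset ?_
      rintro t ⟨x, hx, rfl⟩
      exact Set.subset_biUnion_of_mem (u := fun x => ((e.symm x : Finset K) : Set K)) hx
    have hinj : Set.InjOn (fun x => ((e.symm x : Finset K) : Set K)) h := by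
      intro a _ b _ hab
      have : (e.symm a : Finset K) = e.symm b := Finset.coe_injective hab
      exact e.symm.injective this
    exact hinf (himg.of_finite_image hinj)
  · intro A hA
    classical
    set u : ℕ → K := fun n => Infinite.natEmbedding K n with hu
    have huinj : Function.Injective u := (Infinite.natEmbedding K).injective
    set B : Set K := A ∪ Set.range u with hB
    have hBc : B.Countable := hA.union (Set.countable_range u)
    have hBi : B.Infinite :=
      Set.Infinite.mono Set.subset_union_right (Set.infinite_range_of_injective huinj)
    obtain ⟨f, hf⟩ := hBc.exists_eq_range hBi.nonempty
    set s : ℕ → Finset K := fun n => (Finset.range n).image f with hs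
    set g : ℕ → K := fun n => e (s n) with hg
    have hBsub : B ⊆ ⋃ n, ((s n : Finset K) : Set K) := by
      intro b hb
      rw [hf] at hb
      obtain ⟨k, rfl⟩ := hb
      exact Set.mem_iUnion.2 ⟨k + 1, by simp only [hs, Finset.coe_image, Finset.coe_range]; exact ⟨k, Nat.lt_succ_self k, rfl⟩⟩
    have hSinf : (Set.range g).Infinite := by
      intro hSfin
      have h1 : (Set.range s).Finite := by
        have : Set.range s = (fun x => e.symm x) '' Set.range g := by
          ext t
          simp only [Set.mem_range, Set.mem_image, hg]
          constructor
          · rintro ⟨n, rfl⟩; exact ⟨e (s n), ⟨n, rfl⟩, by simp⟩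
          · rintro ⟨x, ⟨n, rfl⟩, rfl⟩; exact ⟨n, by simp⟩
        rw [this]; exact hSfin.image _
      have h2 : (⋃ n, ((s n : Finset K) : Set K)).Finite := by
        have : (⋃ n, ((s n : Finset K) : Set K)) = ⋃ t ∈ Set.range s, (t : Set K) := by
          simp [Set.biUnion_range]
        rw [this]
        exact h1.biUnion fun t _ => t.finite_toSet
      exact hBi (h2.subset hBsub)
    obtain ⟨h, hh, hhi⟩ := hhit (Set.range g) (Set.countable_range g) hSinf
    refine ⟨F h, ⟨h, hh, rfl⟩, ?_⟩
    have hNinf : {n : ℕ | g n ∈ h}.Infinite := by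
      intro hNfin
      apply hhi
      refine (hNfin.image g).subset ?_
      rintro x ⟨⟨n, rfl⟩, hxh⟩
      exact ⟨n, hxh, rfl⟩
    intro a ha
    have haB : a ∈ B := Or.inl ha
    rw [hf] at haB
    obtain ⟨k, rfl⟩ := haB
    obtain ⟨n, hn, hkn⟩ := hNinf.exists_gt k
    have hmem : f k ∈ ((e.symm (g n) : Finset K) : Set K) := by
      simp only [hg, Equiv.symm_apply_apply]
      simp [hs]
      exact ⟨k, hkn, rfl⟩
    exact Set.mem_biUnion hn hmem
end
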